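/- Let B be a nonzero left brace and (B,r) its associated solution of the YBE. Then (B,r) has multipermutation level m (a finite number) if and only if B^{(m+1)} = 0 and B^{(m)} ≠ 0, where B^{(1)} = B and B^{(n+1)} = B^{(n)} * B. -/

import Mathlib

/-- A left brace: an abelian group `(B,+)` and a group `(B,·)` with the
compatibility law `a·(b+c) + a = a·b + a·c`. -/
class LeftBrace (B : Type*) extends AddCommGroup B, Group B where
  left_compat : ∀ a b c : B, a * (b + c) + a = a * b + a * c

variable {B : Type*} [LeftBrace B]

/-- The star operation `a * b = a·b - a - b` of a left brace. -/
def bstar (a b : B) : B := a * b - a - b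

/-- The map `L_a : b ↦ a·b - a`. -/
def lmap (a b : B) : B := a * b - a

/-- The socle of a left brace. -/
def socle (B : Type*) [LeftBrace B] : Set B := {a : B | ∀ b : B, a * b = a + b}

/-- Iterated star products: `eStar a b m = a*(a*(⋯*(a*b)))` with `a` occurring `m` times. -/
def eStar (a : B) (b : B) : ℕ → B
  | 0 => b
  | k + 1 => bstar a (eStar a b k)

/-- The additive subgroup generated by all `a*c` with `a ∈ A`, `c ∈ C`. -/
def starSub (A C : AddSubgroup B) : AddSubgroup B :=
  AddSubgroup.closure {x : B | ∃ a ∈ A, ∃ c ∈ C, x = bstar a c}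

/-- Rump's left chain: `leftPow B n = B^{n+1}`, i.e. `B^1 = B`, `B^{n+1} = B * B^n`. -/
def leftPow (B : Type*) [LeftBrace B] : ℕ → AddSubgroup B
  | 0 => ⊤
  | n + 1 => starSub ⊤ (leftPow B n)

/-- Rump's right chain: `rightPow B n = B^{(n+1)}`, i.e. `B^{(1)} = B`, `B^{(n+1)} = B^{(n)} * B`. -/
def rightPow (B : Type*) [LeftBrace B] : ℕ → AddSubgroup B
  | 0 => ⊤
  | n + 1 => starSub (rightPow B n) ⊤

/-- The commutator `[g,h] = g⁻¹h⁻¹gh`. -/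
def pcomm {G : Type*} [Group G] (g h : G) : G := g⁻¹ * h⁻¹ * g * h

/-- Iterated commutator `engel g h n = [[…[[g,h],h]…],h]` with `h` occurring `n` times. -/
def engel {G : Type*} [Group G] (g h : G) : ℕ → G
  | 0 => g
  | k + 1 => pcomm (engel g h k) h

/-- A group is Engel if every iterated commutator eventually vanishes. -/
def IsEngelGroup (G : Type*) [Group G] : Prop :=
  ∀ g h : G, ∃ n : ℕ, 0 < n ∧ engel g h n = 1

def r12 {X : Type*} (r : X × X → X × X) : X × X × X → X × X × X :=
  fun p => ((r (p.1, p.2.1)).1, (r (p.1, p.2.1)).2, p.2.2)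

def r23 {X : Type*} (r : X × X → X × X) : X × X × X → X × X × X :=
  fun p => (p.1, r p.2)

/-- A non-degenerate involutive set-theoretic solution of the Yang–Baxter equation. -/
structure YBSolution (X : Type u) where
  r : X × X → X × X
  ybe : r12 r ∘ r23 r ∘ r12 r = r23 r ∘ r12 r ∘ r23 r
  nondegL : ∀ x : X, Function.Bijective fun y => (r (x, y)).1
  nondegR : ∀ y : X, Function.Bijective fun x => (r (x, y)).2
  involutive : ∀ p : X × X, r (r p) = p

/-- `G`, with its left brace structure and the map `ι : X → G`, is the structure group
`G(X,r)` with its canonical left brace structure: `ι` is injective, `(G,+)` is free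
abelian with basis `ι(X)`, `ˣy = L_x(y)` holds, the defining relations hold, and `G`
has the universal property of the group presented by these relations. -/
structure IsCanonicalBrace {X : Type u} (sol : YBSolution X) (G : Type u) [LeftBrace G]
    (ι : X → G) : Prop where
  inj : Function.Injective ι
  basis : ∃ b : Module.Basis X ℤ G, ∀ x : X, b x = ι x
  act : ∀ x y : X, lmap (ι x) (ι y) = ι (sol.r (x, y)).1
  rel : ∀ x y : X, ι x * ι y = ι (sol.r (x, y)).1 * ι (sol.r (x, y)).2
  univ : ∀ {H : Type u} [Group H] (f : X → H),
    (∀ x y : X, f x * f y = f (sol.r (x, y)).1 * f (sol.r (x, y)).2) →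
    ∃! φ : G →* H, ∀ x : X, φ (ι x) = f x

/-- The solution of the YBE associated with a left brace:
`r(a,b) = (L_a(b), L⁻¹_{L_a(b)}(a))`. -/
def braceR (B : Type*) [LeftBrace B] : B × B → B × B :=
  fun p => (lmap p.1 p.2, (lmap p.1 p.2)⁻¹ * (p.1 + lmap p.1 p.2))

/-- `p : X → Y` realizes `solY` as the retraction `Ret(X, solX.r)`: it is surjective,
identifies exactly the points with equal left actions, and intertwines the solutions. -/
def IsRetractionMap {X Y : Type u} (solX : YBSolution X) (solY : YBSolution Y)
    (p : X → Y) : Prop :=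
  Function.Surjective p ∧
  (∀ x x' : X, p x = p x' ↔ ∀ z : X, (solX.r (x, z)).1 = (solX.r (x', z)).1) ∧
  (∀ x z : X, solY.r (p x, p z) = (p (solX.r (x, z)).1, p (solX.r (x, z)).2))

/-- `MplLe sol m` : the `m`-fold retraction of `sol` has cardinality one. -/
inductive MplLe : {X : Type u} → YBSolution X → ℕ → Prop
  | base {X : Type u} (sol : YBSolution X) (x : X) : (∀ y : X, y = x) → MplLe sol 0
  | step {X Y : Type u} (solX : YBSolution X) (solY : YBSolution Y) (p : X → Y) (n : ℕ) :
      IsRetractionMap solX solY p → MplLe solY n → MplLe solX (n + 1)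

/-- `sol` has multipermutation level exactly `m`. -/
def HasMpl {X : Type u} (sol : YBSolution X) (m : ℕ) : Prop :=
  MplLe sol m ∧ ∀ k < m, ¬ MplLe sol k


section Basics
variable {B : Type u} [LeftBrace B]

lemma lb_one_eq_zero : (1 : B) = 0 := by
  have h := LeftBrace.left_compat (1 : B) 0 0
  simpa using h

lemma lb_zero_mul (a : B) : (0 : B) * a = a := by
  rw [← lb_one_eq_zero, one_mul]

lemma lb_mul_zero (a : B) : a * (0 : B) = a := by
  have h := LeftBrace.left_compat a 0 0
  rw [add_zero] at h
  exact (add_left_cancel h).symm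

lemma lmap_add (a b c : B) : lmap a (b + c) = lmap a b + lmap a c := by
  have h := LeftBrace.left_compat a b c
  simp only [lmap]
  linear_combination (norm := abel_nf) h

lemma lmap_zero (a : B) : lmap a (0 : B) = 0 := by
  simp [lmap, lb_mul_zero]

lemma lmap_neg (a b : B) : lmap a (-b) = - lmap a b := by
  have := lmap_add a b (-b)
  rw [add_neg_cancel, lmap_zero] at this
  linear_combination (norm := abel_nf) -this

lemma lmap_sub (a b c : B) : lmap a (b - c) = lmap a b - lmap a c := by
  rw [sub_eq_add_neg, lmap_add, lmap_neg, ← sub_eq_add_neg]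

lemma mul_eq_add_lmap (a b : B) : a * b = a + lmap a b := by
  simp [lmap]

lemma lmap_one (b : B) : lmap (1 : B) b = b := by
  simp [lmap, lb_one_eq_zero, lb_zero_mul]

lemma lmap_mul (a b c : B) : lmap (a * b) c = lmap a (lmap b c) := by
  simp only [lmap]
  have h : a * (b * c - b) = a * (b*c) - a * b + a := by
    have := lmap_sub a (b*c) b
    simp only [lmap] at this
    linear_combination (norm := abel_nf) this
  rw [mul_assoc]
  linear_combination (norm := abel_nf) -h

lemma lmap_lmap_inv (a b : B) : lmap a (lmap a⁻¹ b) = b := by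
  rw [← lmap_mul, mul_inv_cancel, lmap_one]

lemma lmap_inv_lmap (a b : B) : lmap a⁻¹ (lmap a b) = b := by
  rw [← lmap_mul, inv_mul_cancel, lmap_one]

lemma lmap_bijective (a : B) : Function.Bijective (lmap a) :=
  Function.bijective_iff_has_inverse.2 ⟨lmap a⁻¹, lmap_inv_lmap a, lmap_lmap_inv a⟩

lemma mem_socle_iff {a : B} : a ∈ socle B ↔ ∀ b : B, lmap a b = b := by
  unfold socle lmap
  constructor
  · intro h b; rw [h b]; abel
  · intro h b; have := h b; rw [sub_eq_iff_eq_add] at this; rw [this]; abel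

lemma socle_mem_iff' {a : B} (h : a ∈ socle B) : ∀ b : B, a * b = a + b := h

/-- The socle as an additive subgroup. -/
def socAdd (B : Type u) [LeftBrace B] : AddSubgroup B where
  carrier := socle B
  zero_mem' := by intro b; rw [lb_zero_mul, zero_add]
  add_mem' := by
    intro a b ha hb
    have ha' : ∀ c : B, lmap a c = c := mem_socle_iff.1 ha
    have hb' : ∀ c : B, lmap b c = c := mem_socle_iff.1 hb
    have hab : a * b = a + b := ha b
    intro c
    show (a + b) * c = (a + b) + c
    rw [← hab, mul_eq_add_lmap (a*b) c, lmap_mul, hb', ha']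
  neg_mem' := by
    intro a ha
    have ha' : ∀ c : B, lmap a c = c := mem_socle_iff.1 ha
    have hinv : a⁻¹ = -a := by
      have h1 : a * a⁻¹ = a + a⁻¹ := socle_mem_iff' ha a⁻¹
      rw [mul_inv_cancel, lb_one_eq_zero] at h1
      linear_combination (norm := abel_nf) -h1
    intro b
    show (-a) * b = (-a) + b
    rw [← hinv, mul_eq_add_lmap]
    congr 1
    conv_rhs => rw [← lmap_inv_lmap a b, ha']

lemma mem_socAdd_iff {a : B} : a ∈ socAdd B ↔ ∀ b : B, lmap a b = b := mem_socle_iff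

lemma sub_mem_socAdd_iff {x x' : B} :
    x - x' ∈ socAdd B ↔ ∀ z : B, lmap x z = lmap x' z := by
  constructor
  · intro h z
    have hs : ∀ b, lmap (x - x') b = b := mem_socAdd_iff.1 h
    have hx : x = (x - x') * x' := by
      rw [mul_eq_add_lmap, hs]; abel
    rw [hx, lmap_mul, hs]
  · intro h
    have hs : x * x'⁻¹ ∈ socAdd B := by
      rw [mem_socAdd_iff]
      intro b
      rw [lmap_mul, h, lmap_lmap_inv]
    have hx : x - x' = x * x'⁻¹ := by
      have h1 : (x * x'⁻¹) * x' = (x * x'⁻¹) + x' := socle_mem_iff' hs x'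
      rw [inv_mul_cancel_right] at h1
      linear_combination (norm := abel_nf) h1
    rw [hx]; exact hs

lemma lb_mul_add (a p q : B) : a * (p + q) = a * p + a * q - a := by
  linear_combination (norm := abel_nf) (LeftBrace.left_compat a p q)

lemma lb_mul_sub (a p q : B) : a * (p - q) = a * p - a * q + a := by
  have h := lmap_sub a p q
  simp only [lmap] at h
  linear_combination (norm := abel_nf) h

lemma braceR_apply (x y : B) :
    braceR B (x, y) = (lmap x y, (lmap x y)⁻¹ * (x * y)) := by
  have : x + lmap x y = x * y := (mul_eq_add_lmap x y).symm
  simp [braceR, this]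

lemma ybe1 (a b c : B) :
    lmap (lmap a b) (lmap ((lmap a b)⁻¹ * (a * b)) c) = lmap (a * b) c := by
  rw [← lmap_mul, mul_inv_cancel_left]

lemma ybe2 (a b c : B) :
    (lmap (lmap a b) (lmap ((lmap a b)⁻¹ * (a * b)) c))⁻¹ *
      (lmap a b * lmap ((lmap a b)⁻¹ * (a * b)) c) =
    lmap ((lmap a (lmap b c))⁻¹ * (a * lmap b c)) ((lmap b c)⁻¹ * (b * c)) := by
  rw [ybe1, ← lmap_mul]
  set u := lmap a b with hu
  set w := lmap b c with hw
  set p2 := u⁻¹ * (a * b) with hp2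
  set g := (lmap (a * b) c)⁻¹ with hg
  have hup2 : u * p2 = a * b := mul_inv_cancel_left u (a * b)
  have e1 : u * lmap p2 c = a * b * c - a := by
    have h0 : lmap p2 c = p2 * c - p2 := rfl
    have h2 : u * (p2 * c) = a * b * c := by rw [← mul_assoc, hup2]
    have hu' : u = a * b - a := rfl
    rw [h0, lb_mul_sub u (p2 * c) p2, h2, hup2]
    linear_combination (norm := abel_nf) hu'
  have e2 : a * w = a * b * c - (a * b) + a := by
    have h0 : w = b * c - b := rfl
    rw [h0, lb_mul_sub a (b * c) b, ← mul_assoc]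
  have e3 : lmap (g * (a * w)) (w⁻¹ * (b * c)) = g * (a * b * c) - g * (a * w) := by
    have h0 : lmap (g * (a * w)) (w⁻¹ * (b * c))
        = (g * (a * w)) * (w⁻¹ * (b * c)) - g * (a * w) := rfl
    rw [h0]
    congr 1
    group
  have e5 : g * (a * b * c - a * b + a) = g * a - g := by
    have h0 : a * b * c - a * b + a = lmap (a * b) c + a := by
      have h00 : lmap (a * b) c = a * b * c - a * b := rfl
      rw [h00]
    have h1 : g * lmap (a * b) c = 0 := by
      rw [hg, inv_mul_cancel, lb_one_eq_zero]
    rw [h0, lb_mul_add g (lmap (a * b) c) a, h1]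
    abel
  rw [e3, e2, e5, e1, lb_mul_sub g (a * b * c) a]
  abel

lemma ybe3 (a b c : B) :
    (lmap ((lmap a b)⁻¹ * (a * b)) c)⁻¹ * (((lmap a b)⁻¹ * (a * b)) * c) =
    (lmap ((lmap a (lmap b c))⁻¹ * (a * lmap b c)) ((lmap b c)⁻¹ * (b * c)))⁻¹ *
      (((lmap a (lmap b c))⁻¹ * (a * lmap b c)) * ((lmap b c)⁻¹ * (b * c))) := by
  rw [← ybe2, ybe1, ← lmap_mul]
  group

/-- The YB solution associated with a left brace. -/
def braceSol (B : Type u) [LeftBrace B] : YBSolution B where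
  r := braceR B
  ybe := by
    funext p
    obtain ⟨a, b, c⟩ := p
    simp only [Function.comp_apply, r12, r23, braceR_apply]
    refine Prod.ext ?_ (Prod.ext ?_ ?_) <;> dsimp only
    · exact (ybe1 a b c).trans (lmap_mul a b c)
    · exact ybe2 a b c
    · exact ybe3 a b c
  nondegL := by
    intro x
    simpa only [braceR_apply] using lmap_bijective x
  nondegR := by
    intro y
    have key : ∀ x : B, x⁻¹ * lmap x y = y + x⁻¹ := by
      intro x
      have hl : lmap x y = x * y - x := rfl
      rw [hl, lb_mul_sub x⁻¹ (x * y) x, ← mul_assoc, inv_mul_cancel,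
        lb_one_eq_zero, lb_zero_mul]
      abel
    rw [Function.bijective_iff_has_inverse]
    refine ⟨fun v => (y * v⁻¹ - y)⁻¹, ?_, ?_⟩
    · intro x
      simp only [braceR_apply]
      have h1 : y * ((lmap x y)⁻¹ * (x * y))⁻¹ = x⁻¹ * lmap x y := by
        have hl : lmap x y = x * y - x := rfl
        rw [hl]
        group
      show (y * ((lmap x y)⁻¹ * (x * y))⁻¹ - y)⁻¹ = x
      rw [h1, key x]
      have h2 : y + x⁻¹ - y = x⁻¹ := by abel
      rw [h2, inv_inv]
    · intro v
      simp only [braceR_apply]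
      set x := (y * v⁻¹ - y)⁻¹ with hx
      have hxi : x⁻¹ = y * v⁻¹ - y := by rw [hx, inv_inv]
      have hA : x⁻¹ * lmap x y = y * v⁻¹ := by
        rw [key x, hxi]; abel
      have hA' : lmap x y = x * (y * v⁻¹) := by
        rw [← hA, mul_inv_cancel_left]
      show (lmap x y)⁻¹ * (x * y) = v
      rw [hA']
      group
  involutive := by
    intro p
    obtain ⟨a, b⟩ := p
    simp only [braceR_apply]
    have h1 : lmap (lmap a b) ((lmap a b)⁻¹ * (a * b)) = a := by
      have h0 : lmap (lmap a b) ((lmap a b)⁻¹ * (a * b))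
          = lmap a b * ((lmap a b)⁻¹ * (a * b)) - lmap a b := rfl
      rw [h0, mul_inv_cancel_left]
      have : lmap a b = a * b - a := rfl
      rw [this]; abel
    rw [h1]
    refine Prod.ext rfl ?_
    dsimp only
    rw [mul_inv_cancel_left]
    group

lemma braceSol_r : (braceSol B).r = braceR B := rfl

end Basics

section Quotient
variable {B : Type u} [LeftBrace B]

/-- The quotient of a left brace by its socle. -/
abbrev QB (B : Type u) [LeftBrace B] := B ⧸ socAdd B

lemma qb_mk_eq_mk {x y : B} :
    (x : QB B) = (y : QB B) ↔ ∀ z : B, lmap x z = lmap y z := by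
  rw [QuotientAddGroup.eq_iff_sub_mem, sub_mem_socAdd_iff]

lemma lmap_congr {x y : B} (h : ∀ z : B, lmap x z = lmap y z) :
    ∀ z : B, lmap x⁻¹ z = lmap y⁻¹ z := by
  intro z
  conv_lhs => rw [← lmap_lmap_inv y z, ← h (lmap y⁻¹ z), lmap_inv_lmap]

instance qbMul : Mul (QB B) :=
  ⟨Quotient.map₂ (· * ·) (by
    intro x x' hx y y' hy
    have hx' : (x : QB B) = x' := Quotient.sound hx
    have hy' : (y : QB B) = y' := Quotient.sound hy
    rw [qb_mk_eq_mk] at hx' hy'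
    have : ((x * y : B) : QB B) = ((x' * y' : B) : QB B) := by
      rw [qb_mk_eq_mk]
      intro z
      rw [lmap_mul, lmap_mul, hy', hx']
    exact Quotient.exact this)⟩

lemma qb_mk_mul (x y : B) : ((x * y : B) : QB B) = (x : QB B) * (y : QB B) := rfl

instance qbInv : Inv (QB B) :=
  ⟨Quotient.map (·⁻¹) (by
    intro x x' hx
    have hx' : (x : QB B) = x' := Quotient.sound hx
    rw [qb_mk_eq_mk] at hx'
    have : ((x⁻¹ : B) : QB B) = ((x'⁻¹ : B) : QB B) := by
      rw [qb_mk_eq_mk]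
      exact lmap_congr hx'
    exact Quotient.exact this)⟩

lemma qb_mk_inv (x : B) : ((x⁻¹ : B) : QB B) = (x : QB B)⁻¹ := rfl

instance qbGroup : Group (QB B) where
  mul := (· * ·)
  one := ((1 : B) : QB B)
  inv := (·⁻¹)
  mul_assoc := by
    intro a b c
    induction a using QuotientAddGroup.induction_on
    induction b using QuotientAddGroup.induction_on
    induction c using QuotientAddGroup.induction_on
    rw [← qb_mk_mul, ← qb_mk_mul, ← qb_mk_mul, ← qb_mk_mul, mul_assoc]
  one_mul := by
    intro a
    induction a using QuotientAddGroup.induction_on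
    show ((1 : B) : QB B) * _ = _
    rw [← qb_mk_mul, one_mul]
  mul_one := by
    intro a
    induction a using QuotientAddGroup.induction_on
    show _ * ((1 : B) : QB B) = _
    rw [← qb_mk_mul, mul_one]
  inv_mul_cancel := by
    intro a
    induction a using QuotientAddGroup.induction_on
    show _ * _ = ((1 : B) : QB B)
    rw [← qb_mk_inv, ← qb_mk_mul, inv_mul_cancel]

instance qbBrace : LeftBrace (QB B) :=
  { (inferInstance : AddCommGroup (QB B)), (inferInstance : Group (QB B)) with
    left_compat := by
      intro a b c
      induction a using QuotientAddGroup.induction_on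
      induction b using QuotientAddGroup.induction_on
      induction c using QuotientAddGroup.induction_on
      rename_i x y z
      show ((x : QB B) * ((y : QB B) + (z : QB B)) + (x : QB B) : QB B) = _
      rw [← QuotientAddGroup.mk_add, ← qb_mk_mul, ← QuotientAddGroup.mk_add,
        ← qb_mk_mul, ← qb_mk_mul, ← QuotientAddGroup.mk_add]
      exact congrArg _ (LeftBrace.left_compat x y z) }

lemma qb_mk_lmap (x y : B) :
    lmap ((x : QB B)) ((y : QB B)) = ((lmap x y : B) : QB B) := by
  show (x : QB B) * (y : QB B) - (x : QB B) = _
  rw [← qb_mk_mul, ← QuotientAddGroup.mk_sub]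
  rfl

lemma qb_mk_bstar (x y : B) :
    ((bstar x y : B) : QB B) = bstar (x : QB B) (y : QB B) := by
  show ((x * y - x - y : B) : QB B) = (x : QB B) * (y : QB B) - (x : QB B) - (y : QB B)
  rw [QuotientAddGroup.mk_sub, QuotientAddGroup.mk_sub, qb_mk_mul]

lemma bstar_eq_zero_iff {a c : B} : bstar a c = 0 ↔ lmap a c = c := by
  unfold bstar lmap
  constructor
  · intro h; linear_combination (norm := abel_nf) h
  · intro h; linear_combination (norm := abel_nf) h

lemma rightPow_succ_eq_bot_iff (k : ℕ) :
    rightPow B (k + 1) = ⊥ ↔ rightPow B k ≤ socAdd B := by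
  show starSub (rightPow B k) ⊤ = ⊥ ↔ _
  rw [starSub, eq_bot_iff, AddSubgroup.closure_le]
  constructor
  · intro h a ha
    rw [mem_socAdd_iff]
    intro c
    have : bstar a c ∈ ((⊥ : AddSubgroup B) : Set B) :=
      h ⟨a, ha, c, AddSubgroup.mem_top c, rfl⟩
    rw [AddSubgroup.coe_bot, Set.mem_singleton_iff] at this
    exact bstar_eq_zero_iff.1 this
  · rintro h x ⟨a, ha, c, -, rfl⟩
    rw [AddSubgroup.coe_bot, Set.mem_singleton_iff]
    exact bstar_eq_zero_iff.2 (mem_socAdd_iff.1 (h ha) c)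

lemma map_rightPow (k : ℕ) :
    (rightPow B k).map (QuotientAddGroup.mk' (socAdd B)) = rightPow (QB B) k := by
  induction k with
  | zero =>
    exact AddSubgroup.map_top_of_surjective _ (QuotientAddGroup.mk'_surjective _)
  | succ k ih =>
    show ((starSub (rightPow B k) ⊤ : AddSubgroup B)).map _ = starSub (rightPow (QB B) k) ⊤
    rw [starSub, starSub, AddMonoidHom.map_closure]
    congr 1
    ext q
    constructor
    · rintro ⟨x, ⟨a, ha, c, -, rfl⟩, rfl⟩
      refine ⟨(a : QB B), ?_, (c : QB B), AddSubgroup.mem_top _, ?_⟩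
      · rw [← ih]; exact ⟨a, ha, rfl⟩
      · exact qb_mk_bstar a c
    · rintro ⟨a', ha', c', -, rfl⟩
      rw [← ih] at ha'
      obtain ⟨a, ha, rfl⟩ := ha'
      obtain ⟨c, rfl⟩ := QuotientAddGroup.mk'_surjective (socAdd B) c'
      exact ⟨bstar a c, ⟨a, ha, c, AddSubgroup.mem_top c, rfl⟩, (qb_mk_bstar a c).symm⟩

lemma rightPow_qb_iff (k : ℕ) :
    rightPow B (k + 1) = ⊥ ↔ rightPow (QB B) k = ⊥ := by
  rw [rightPow_succ_eq_bot_iff, ← map_rightPow,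
    AddSubgroup.map_eq_bot_iff (rightPow B k), QuotientAddGroup.ker_mk']

lemma rightPow_antitone (n : ℕ) : rightPow B (n + 1) ≤ rightPow B n := by
  induction n with
  | zero => exact le_top
  | succ n ih =>
    show starSub (rightPow B (n+1)) ⊤ ≤ starSub (rightPow B n) ⊤
    apply AddSubgroup.closure_mono
    rintro x ⟨a, ha, c, -, rfl⟩
    exact ⟨a, ih ha, c, AddSubgroup.mem_top c, rfl⟩

lemma rightPow_le_of_le {j k : ℕ} (h : j ≤ k) : rightPow B k ≤ rightPow B j := by
  induction h with
  | refl => exact le_rfl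
  | step _ ih => exact le_trans (rightPow_antitone _) ih

lemma qb_retraction (sol : YBSolution B) (hsol : sol.r = braceR B) :
    IsRetractionMap sol (braceSol (QB B)) (fun x : B => (x : QB B)) := by
  refine ⟨fun q => QuotientAddGroup.induction_on q (fun x => ⟨x, rfl⟩), ?_, ?_⟩
  · intro x x'
    rw [hsol]
    simp only [braceR_apply]
    exact qb_mk_eq_mk
  · intro x z
    rw [hsol]
    show braceR (QB B) ((x : QB B), (z : QB B)) = _
    simp only [braceR_apply]
    rw [qb_mk_lmap]
    refine Prod.ext rfl ?_
    show ((lmap x z : B) : QB B)⁻¹ * ((x : QB B) * (z : QB B))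
        = ((lmap x z)⁻¹ * (x * z) : B)
    rw [← qb_mk_inv, ← qb_mk_mul, ← qb_mk_mul]

end Quotient

section Transfer

lemma mplLe_transfer {X Y Z : Type u} {solX : YBSolution X} {solY : YBSolution Y}
    {solZ : YBSolution Z} {p : X → Y} {q : X → Z} (hp : IsRetractionMap solX solY p)
    (hq : IsRetractionMap solX solZ q) {n : ℕ} (h : MplLe solY n) : MplLe solZ n := by
  obtain ⟨hps, hpe, hpr⟩ := hp
  obtain ⟨hqs, hqe, hqr⟩ := hq
  cases h with
  | base sol y0 hy0 =>
    obtain ⟨x0, -⟩ := hps y0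
    refine MplLe.base solZ (q x0) ?_
    intro z
    obtain ⟨x, rfl⟩ := hqs z
    rw [hqe x x0]
    exact (hpe x x0).1 ((hy0 (p x)).trans (hy0 (p x0)).symm)
  | step solY solW p' n hp' hW =>
    obtain ⟨hp's, hp'e, hp'r⟩ := hp'
    have helper1 : ∀ x x' : X, q x = q x' → p' (p x) = p' (p x') := by
      intro x x' h
      have h1 : ∀ w, (solX.r (x, w)).1 = (solX.r (x', w)).1 := (hqe x x').1 h
      rw [hp'e]
      intro u
      obtain ⟨w, rfl⟩ := hps u
      rw [hpr x w, hpr x' w]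
      dsimp only
      rw [h1 w]
    have helper2 : ∀ x x' : X, p' (p x) = p' (p x') ↔
        ∀ w, q ((solX.r (x, w)).1) = q ((solX.r (x', w)).1) := by
      intro x x'
      rw [hp'e]
      constructor
      · intro h w
        have h2 : p ((solX.r (x, w)).1) = p ((solX.r (x', w)).1) := by
          have h3 := h (p w)
          rw [hpr x w, hpr x' w] at h3
          exact h3
        exact (hqe _ _).2 ((hpe _ _).1 h2)
      · intro h u
        obtain ⟨w, rfl⟩ := hps u
        rw [hpr x w, hpr x' w]
        dsimp only
        exact (hpe _ _).2 ((hqe _ _).1 (h w))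
    set f := fun z => p' (p (Function.surjInv hqs z)) with hf
    have hfq : ∀ x : X, f (q x) = p' (p x) :=
      fun x => helper1 _ _ (Function.surjInv_eq hqs (q x))
    refine MplLe.step solZ solW f n ⟨?_, ?_, ?_⟩ hW
    · intro w
      obtain ⟨y, rfl⟩ := hp's w
      obtain ⟨x, rfl⟩ := hps y
      exact ⟨q x, hfq x⟩
    · intro z z'
      obtain ⟨x, rfl⟩ := hqs z
      obtain ⟨x', rfl⟩ := hqs z'
      rw [hfq, hfq, helper2]
      constructor
      · intro h t
        obtain ⟨w, rfl⟩ := hqs t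
        rw [hqr x w, hqr x' w]
        dsimp only
        rw [h w]
      · intro h w
        have h3 := h (q w)
        rw [hqr x w, hqr x' w] at h3
        exact h3
    · intro z t
      obtain ⟨x, rfl⟩ := hqs z
      obtain ⟨w, rfl⟩ := hqs t
      rw [hfq, hfq, hp'r, hpr x w, hqr x w]
      dsimp only
      rw [hfq, hfq]

end Transfer

section Key

lemma key_lemma (k : ℕ) : ∀ {B : Type u} [LeftBrace B] (sol : YBSolution B),
    sol.r = braceR B → (MplLe sol k ↔ rightPow B k = ⊥) := by
  induction k with
  | zero =>
    intro B _ sol hsol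
    constructor
    · intro h
      cases h with
      | base sol x hx =>
        show (⊤ : AddSubgroup B) = ⊥
        ext b
        simp only [AddSubgroup.mem_top, AddSubgroup.mem_bot, true_iff]
        rw [hx b, hx 0]
    · intro h
      refine MplLe.base sol 0 ?_
      intro y
      have : y ∈ (⊥ : AddSubgroup B) := h ▸ AddSubgroup.mem_top y
      simpa using this
  | succ k ih =>
    intro B _ sol hsol
    constructor
    · intro h
      cases h with
      | step _ solY p n hp hY =>
        have hq := qb_retraction sol hsol
        have hz : MplLe (braceSol (QB B)) k := mplLe_transfer hp hq hY
        rw [rightPow_qb_iff]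
        exact (ih (braceSol (QB B)) rfl).1 hz
    · intro h
      have hq := qb_retraction sol hsol
      exact MplLe.step sol (braceSol (QB B)) _ k hq
        ((ih _ rfl).2 ((rightPow_qb_iff k).1 h))

end Key

theorem stmt12 {B : Type u} [LeftBrace B] (hB : ∃ b : B, b ≠ 0)
    (sol : YBSolution B) (hsol : sol.r = braceR B) (m : ℕ) :
    HasMpl sol m ↔ (rightPow B m = ⊥ ∧ rightPow B (m - 1) ≠ ⊥) := by
  obtain ⟨b0, hb0⟩ := hB
  have htop : rightPow B 0 ≠ ⊥ := by
    intro h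
    exact hb0 (by simpa using (h ▸ AddSubgroup.mem_top b0 : b0 ∈ (⊥ : AddSubgroup B)))
  unfold HasMpl
  rw [key_lemma m sol hsol]
  constructor
  · rintro ⟨h1, h2⟩
    refine ⟨h1, ?_⟩
    match m with
    | 0 => exact absurd h1 htop
    | k + 1 =>
      show rightPow B k ≠ ⊥
      intro hk
      exact h2 k (Nat.lt_succ_self k) ((key_lemma k sol hsol).2 hk)
  · rintro ⟨h1, h2⟩
    refine ⟨h1, ?_⟩
    intro j hj hmpl
    have hjbot : rightPow B j = ⊥ := (key_lemma j sol hsol).1 hmpl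
    match m with
    | 0 => exact absurd hjbot (Nat.not_lt_zero j hj).elim
    | k + 1 =>
      have hjk : j ≤ k := Nat.lt_succ_iff.1 hj
      have hmono : rightPow B k ≤ rightPow B j := rightPow_le_of_le hjk
      exact h2 (by rw [eq_bot_iff, ← hjbot]; exact hmono)
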